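/- The map Ψ : Σ → S defined by Ψ(a,b) = (a/b, (1−a)/(1−b)) is well defined (its image lies in S) and is a bijection. Moreover, for (a,b) ∈ Σ and (x,y) ∈ S one has Ψ(a,b) = (x,y) if and only if a = x(1−y)/(x−y), b = (1−y)/(x−y), 1−a = y(1−x)/(y−x) and 1−b = (1−x)/(y−x); in particular, for each (a,b) ∈ Σ there exists exactly one (x,y) ∈ S satisfying these four equations. -/

import Mathlib

open scoped Classical

noncomputable section

/-- The operation of the quasigroup `Q_{a,b}`:
`u*v = u + a(v-u)` if `v-u` is a square, `u*v = u + b(v-u)` otherwise. -/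
def qop {F : Type*} [Field F] (a b u v : F) : F :=
  if IsSquare (v - u) then u + a * (v - u) else u + b * (v - u)

/-- The set `Σ(F)` of pairs `(a,b)` with `a ≠ b`, `a,b ∉ {0,1}`, and
`ab` and `(1-a)(1-b)` both squares. -/
def SigSet (F : Type*) [Field F] : Set (F × F) :=
  {p | p.1 ≠ p.2 ∧ p.1 ≠ 0 ∧ p.1 ≠ 1 ∧ p.2 ≠ 0 ∧ p.2 ≠ 1 ∧
    IsSquare (p.1 * p.2) ∧ IsSquare ((1 - p.1) * (1 - p.2))}

/-- `Q_{a,b}` is maximally nonassociative. -/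
def MaxNA {F : Type*} [Field F] (a b : F) : Prop :=
  ∀ u v w : F, qop a b (qop a b u v) w = qop a b u (qop a b v w) → u = v ∧ v = w

/-- `σ(q)`: the number of pairs `(a,b) ∈ Σ` for which `Q_{a,b}` is
maximally nonassociative. -/
def sigmaCount (F : Type*) [Field F] : ℕ :=
  Set.ncard {p : F × F | p ∈ SigSet F ∧ MaxNA p.1 p.2}

/-- The set `S(F)` of pairs `(x,y)` of squares with `x ≠ y`, `x,y ∉ {0,1}`. -/
def SPairs (F : Type*) [Field F] : Set (F × F) :=
  {p | IsSquare p.1 ∧ IsSquare p.2 ∧ p.1 ≠ p.2 ∧ p.1 ≠ 0 ∧ p.1 ≠ 1 ∧ p.2 ≠ 0 ∧ p.2 ≠ 1}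

/-- The map `Ψ : Σ → S`, `(a,b) ↦ (a/b, (1-a)/(1-b))`. -/
def PsiMap {F : Type*} [Field F] (p : F × F) : F × F :=
  (p.1 / p.2, (1 - p.1) / (1 - p.2))

section Aux

variable {F : Type*} [Field F]

lemma isSquare_div' {a b : F} (h : IsSquare (a * b)) (hb : b ≠ 0) :
    IsSquare (a / b) := by
  obtain ⟨w, hw⟩ := h
  refine ⟨w / b, ?_⟩
  field_simp
  linear_combination hw

/-- The inverse map `Φ : S → Σ`. -/
def Phi (p : F × F) : F × F :=
  (p.1 * (1 - p.2) / (p.1 - p.2), (1 - p.2) / (p.1 - p.2))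

lemma psi_mem {a b : F} (h : (a, b) ∈ SigSet F) : PsiMap (a, b) ∈ SPairs F := by
  obtain ⟨hab, ha0, ha1, hb0, hb1, hsq1, hsq2⟩ := h
  have h1b : (1 : F) - b ≠ 0 := sub_ne_zero.mpr (Ne.symm hb1)
  refine ⟨isSquare_div' hsq1 hb0, isSquare_div' hsq2 h1b, ?_, ?_, ?_, ?_, ?_⟩
  · intro h
    apply hab
    have h3 := (div_eq_div_iff hb0 h1b).mp h
    linear_combination h3
  · exact div_ne_zero ha0 hb0
  · intro h
    exact hab ((div_eq_one_iff_eq hb0).mp h)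
  · exact div_ne_zero (sub_ne_zero.mpr (Ne.symm ha1)) h1b
  · intro h
    have h3 := (div_eq_one_iff_eq h1b).mp h
    exact hab (by linear_combination -h3)

lemma phi_mem {x y : F} (h : (x, y) ∈ SPairs F) : Phi (x, y) ∈ SigSet F := by
  obtain ⟨hsx, hsy, hxy, hx0, hx1, hy0, hy1⟩ := h
  have hd : x - y ≠ 0 := sub_ne_zero.mpr hxy
  have h1y : (1 : F) - y ≠ 0 := sub_ne_zero.mpr (Ne.symm hy1)
  have h1x : (1 : F) - x ≠ 0 := sub_ne_zero.mpr (Ne.symm hx1)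
  refine ⟨?_, ?_, ?_, ?_, ?_, ?_, ?_⟩
  · simp only [Phi]
    intro h
    rw [div_eq_div_iff hd hd] at h
    have h2 : (x - 1) * (1 - y) * (x - y) = 0 := by linear_combination h
    rw [mul_eq_zero] at h2
    rcases h2 with h2 | h2
    swap
    · exact hd h2
    rcases mul_eq_zero.mp h2 with h' | h'
    · exact hx1 (by linear_combination h')
    · exact h1y h'
  · exact div_ne_zero (mul_ne_zero hx0 h1y) hd
  · simp only [Phi]
    intro h
    rw [div_eq_one_iff_eq hd] at h
    have h2 : y * (1 - x) = 0 := by linear_combination h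
    rcases mul_eq_zero.mp h2 with h' | h'
    · exact hy0 h'
    · exact h1x h'
  · exact div_ne_zero h1y hd
  · simp only [Phi]
    intro h
    rw [div_eq_one_iff_eq hd] at h
    exact hx1 (by linear_combination -h)
  · obtain ⟨s, hs⟩ := hsx
    refine ⟨s * (1 - y) / (x - y), ?_⟩
    simp only [Phi]
    rw [show x = s * s from hs]
    ring
  · obtain ⟨s, hs⟩ := hsy
    refine ⟨s * (x - 1) / (x - y), ?_⟩
    have e1 : (1 : F) - x * (1 - y) / (x - y) = y * (x - 1) / (x - y) := by
      field_simp; ring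
    have e2 : (1 : F) - (1 - y) / (x - y) = (x - 1) / (x - y) := by
      field_simp
      ring
    simp only [Phi, e1, e2]
    rw [show y = s * s from hs]
    ring

lemma psi_phi {x y : F} (h : (x, y) ∈ SPairs F) : PsiMap (Phi (x, y)) = (x, y) := by
  obtain ⟨hsx, hsy, hxy, hx0, hx1, hy0, hy1⟩ := h
  have hd : x - y ≠ 0 := sub_ne_zero.mpr hxy
  have h1y : (1 : F) - y ≠ 0 := sub_ne_zero.mpr (Ne.symm hy1)
  have h1x : (1 : F) - x ≠ 0 := sub_ne_zero.mpr (Ne.symm hx1)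
  have hx1' : x - 1 ≠ 0 := sub_ne_zero.mpr hx1
  have e1 : (1 : F) - x * (1 - y) / (x - y) = y * (x - 1) / (x - y) := by
    field_simp; ring
  have e2 : (1 : F) - (1 - y) / (x - y) = (x - 1) / (x - y) := by
    field_simp
    ring
  simp only [PsiMap, Phi, Prod.mk.injEq, e1, e2]
  constructor
  · rw [div_eq_iff (div_ne_zero h1y hd)]; ring
  · rw [div_eq_iff (div_ne_zero hx1' hd)]; ring

lemma phi_psi {a b : F} (h : (a, b) ∈ SigSet F) : Phi (PsiMap (a, b)) = (a, b) := by
  obtain ⟨hab, ha0, ha1, hb0, hb1, hsq1, hsq2⟩ := h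
  have h1b : (1 : F) - b ≠ 0 := sub_ne_zero.mpr (Ne.symm hb1)
  have habz : a - b ≠ 0 := sub_ne_zero.mpr hab
  have key : a / b - (1 - a) / (1 - b) = (a - b) / (b * (1 - b)) := by
    field_simp; ring
  have h1y : (1 : F) - (1 - a) / (1 - b) = (a - b) / (1 - b) := by
    field_simp
    ring
  simp only [Phi, PsiMap, Prod.mk.injEq, h1y, key]
  constructor
  · field_simp
  · field_simp

end Aux

/-- Proposition 1.2: `Ψ : Σ → S` is a well-defined bijection, `Ψ(a,b) = (x,y)`
is equivalent to the four equations (1.4), and each `(a,b) ∈ Σ` determines a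
unique `(x,y) ∈ S` satisfying them. -/
theorem psiMap_bijection (F : Type*) [Field F] [Fintype F]
    (hodd : Odd (Fintype.card F)) :
    Set.BijOn PsiMap (SigSet F) (SPairs F) ∧
    (∀ a b x y : F, (a, b) ∈ SigSet F → (x, y) ∈ SPairs F →
      (PsiMap (a, b) = (x, y) ↔
        (a = x * (1 - y) / (x - y) ∧ b = (1 - y) / (x - y) ∧
          1 - a = y * (1 - x) / (y - x) ∧ 1 - b = (1 - x) / (y - x)))) ∧
    (∀ a b : F, (a, b) ∈ SigSet F → ∃! p : F × F, p ∈ SPairs F ∧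
      a = p.1 * (1 - p.2) / (p.1 - p.2) ∧ b = (1 - p.2) / (p.1 - p.2) ∧
      1 - a = p.2 * (1 - p.1) / (p.2 - p.1) ∧ 1 - b = (1 - p.1) / (p.2 - p.1)) := by
  have key : ∀ a b x y : F, (a, b) ∈ SigSet F → (x, y) ∈ SPairs F →
      (PsiMap (a, b) = (x, y) ↔
        (a = x * (1 - y) / (x - y) ∧ b = (1 - y) / (x - y) ∧
          1 - a = y * (1 - x) / (y - x) ∧ 1 - b = (1 - x) / (y - x))) := by
    intro a b x y hab hxy
    obtain ⟨hsx, hsy, hxyne, hx0, hx1, hy0, hy1⟩ := hxy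
    have hd : x - y ≠ 0 := sub_ne_zero.mpr hxyne
    have hd' : y - x ≠ 0 := sub_ne_zero.mpr (Ne.symm hxyne)
    have h1y : (1 : F) - y ≠ 0 := sub_ne_zero.mpr (Ne.symm hy1)
    have h1x : (1 : F) - x ≠ 0 := sub_ne_zero.mpr (Ne.symm hx1)
    constructor
    · intro hpsi
      have hphi := phi_psi hab
      rw [hpsi] at hphi
      simp only [Phi, Prod.mk.injEq] at hphi
      obtain ⟨e1, e2⟩ := hphi
      refine ⟨e1.symm, e2.symm, ?_, ?_⟩
      · rw [← e1]; field_simp; ring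
      · rw [← e2]; field_simp; ring
    · rintro ⟨e1, e2, _, _⟩
      have : (a, b) = Phi (x, y) := by
        simp only [Phi, Prod.mk.injEq]
        exact ⟨e1, e2⟩
      rw [this, psi_phi ⟨hsx, hsy, hxyne, hx0, hx1, hy0, hy1⟩]
  refine ⟨⟨?_, ?_, ?_⟩, key, ?_⟩
  · rintro ⟨a, b⟩ hab
    exact psi_mem hab
  · rintro ⟨a, b⟩ hab ⟨c, d⟩ hcd heq
    have := phi_psi hab
    rw [heq, phi_psi hcd] at this
    exact this.symm
  · rintro ⟨x, y⟩ hxy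
    exact ⟨Phi (x, y), phi_mem hxy, psi_phi hxy⟩
  · intro a b hab
    refine ⟨PsiMap (a, b), ⟨psi_mem hab, ?_⟩, ?_⟩
    · have := (key a b (PsiMap (a, b)).1 (PsiMap (a, b)).2 hab (psi_mem hab)).mp rfl
      exact this
    · rintro ⟨x, y⟩ ⟨hmem, e1, e2, e3, e4⟩
      exact ((key a b x y hab hmem).mpr ⟨e1, e2, e3, e4⟩).symm
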